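/- For any infinite cardinals λ ≥ μ with μ regular, there is a function F : λ × λ → μ such that for any S ⊆ λ of cardinality μ, there exists α ∈ λ with {F(α,β) : β ∈ S} of cardinality μ. -/

import Mathlib

universe u

open Ordinal Cardinal Set

noncomputable section StmtAux

/-- A chosen fundamental sequence for each ordinal. -/
def stmtFseq (d : Ordinal.{u}) : ∀ b < d.cof.ord, Ordinal.{u} :=
  (Ordinal.exists_fundamental_sequence d).choose

theorem stmtFseq_spec (d : Ordinal.{u}) :
    Ordinal.IsFundamentalSequence d d.cof.ord (stmtFseq d) :=
  (Ordinal.exists_fundamental_sequence d).choose_spec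

/-- `stmtG d x` : the least index `ξ` with `x ≤ stmtFseq d ξ`. -/
def stmtG (d x : Ordinal.{u}) : Ordinal.{u} :=
  sInf {ξ | ∃ h : ξ < d.cof.ord, x ≤ stmtFseq d ξ h}

theorem stmtG_mem {d x : Ordinal.{u}} (hx : x < d) :
    stmtG d x ∈ {ξ | ∃ h : ξ < d.cof.ord, x ≤ stmtFseq d ξ h} := by
  apply csInf_mem
  have hb := (stmtFseq_spec d).blsub_eq
  rw [← hb] at hx
  obtain ⟨i, hi, hle⟩ := Ordinal.lt_blsub_iff.1 hx
  exact ⟨i, hi, hle⟩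

theorem stmtG_lt {d x : Ordinal.{u}} (hx : x < d) : stmtG d x < d.cof.ord :=
  (stmtG_mem hx).choose

theorem stmtG_gt {d x η : Ordinal.{u}} (hη : η < d.cof.ord) (hx : x < d)
    (hfx : stmtFseq d η hη < x) : η < stmtG d x := by
  by_contra hle
  push_neg at hle
  obtain ⟨hG, hxG⟩ := stmtG_mem hx
  exact absurd (hxG.trans ((stmtFseq_spec d).monotone hG hη hle)) (not_le.2 hfx)

/-- The ordinal below `o` corresponding to an element of `o.ToType`. -/
def stmtB (o : Ordinal.{u}) (x : o.ToType) : Ordinal.{u} :=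
  (((Ordinal.ToType.mk (o := o))).symm x).1

theorem stmtB_lt (o : Ordinal.{u}) (x : o.ToType) : stmtB o x < o :=
  (((Ordinal.ToType.mk (o := o))).symm x).2

theorem stmtB_apply (o : Ordinal.{u}) (x : Set.Iio o) :
    stmtB o ((Ordinal.ToType.mk (o := o)) x) = x.1 := by
  rw [stmtB, OrderIso.symm_apply_apply]

theorem lt_of_stmtB_lt {o : Ordinal.{u}} {x y : o.ToType}
    (h : stmtB o x < stmtB o y) : x < y := by
  have : ((Ordinal.ToType.mk (o := o))).symm x < ((Ordinal.ToType.mk (o := o))).symm y :=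
    Subtype.mk_lt_mk.2 h
  exact (((Ordinal.ToType.mk (o := o))).symm.lt_iff_lt).1 this

theorem stmtB_inj {o : Ordinal.{u}} {x y : o.ToType} (h : stmtB o x = stmtB o y) : x = y :=
  ((Ordinal.ToType.mk (o := o))).symm.injective (Subtype.ext h)

/-- Code an ordinal `z < m'` as an element of `m'.ToType`. -/
def stmtCode {m' : Ordinal.{u}} (hpos : 0 < m') (z : Ordinal.{u}) : m'.ToType :=
  if h : z < m' then (Ordinal.ToType.mk (o := m')) ⟨z, h⟩ else (Ordinal.ToType.mk (o := m')) ⟨0, hpos⟩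

theorem stmtB_code {m' : Ordinal.{u}} (hpos : 0 < m') {z : Ordinal.{u}} (h : z < m') :
    stmtB m' (stmtCode hpos z) = z := by
  rw [stmtCode, dif_pos h, stmtB_apply]

/-- The coloring. -/
def stmtF (o : Ordinal.{u}) {m' : Ordinal.{u}} (hpos : 0 < m') (a b : o.ToType) : m'.ToType :=
  stmtCode hpos (stmtG (if stmtB o b < stmtB o a then stmtB o a else o) (stmtB o b))

theorem stmt_card_le_of_unbounded {o : Ordinal.{u}} (U : Set o.ToType)
    (h : ∀ η < o, ∃ y ∈ U, η < stmtB o y) : o.cof ≤ Cardinal.mk U := by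
  rw [← Ordinal.cof_toType]
  apply Order.cof_le
  intro z
  obtain ⟨y, hyU, hy⟩ := h _ (stmtB_lt o z)
  exact ⟨y, hyU, (lt_of_stmtB_lt hy).le⟩

end StmtAux

theorem stmt15 (l m : Cardinal.{u}) (hm : Cardinal.aleph0 ≤ m) (hlm : m ≤ l)
    (hreg : m.IsRegular) :
    ∃ F : (Cardinal.ord l).ToType → (Cardinal.ord l).ToType → (Cardinal.ord m).ToType,
      ∀ S : Set (Cardinal.ord l).ToType, Cardinal.mk ↥S = m →
        ∃ a : (Cardinal.ord l).ToType, Cardinal.mk ↥(F a '' S) = m := by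
  classical
  have hm0 : (0 : Cardinal) < m := aleph0_pos.trans_le hm
  have hmpos : (0 : Ordinal) < m.ord := by
    rw [← Cardinal.ord_zero]; exact Cardinal.ord_lt_ord.2 hm0
  have hlpos : (0 : Ordinal) < l.ord := by
    rw [← Cardinal.ord_zero]; exact Cardinal.ord_lt_ord.2 (hm0.trans_le hlm)
  have hlne : Nonempty l.ord.ToType :=
    Ordinal.nonempty_toType_iff.2 hlpos.ne'
  refine ⟨stmtF l.ord hmpos, ?_⟩
  intro S hS
  set Sd : Ordinal.{u} → Set l.ord.ToType := fun d => {x | x ∈ S ∧ stmtB l.ord x < d}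
    with hSddef
  have hDmem : l.ord ∈ {d | Cardinal.mk (Sd d) = m} := by
    have hSo : Sd l.ord = S := by
      ext x; exact ⟨fun h => h.1, fun h => ⟨h, stmtB_lt _ x⟩⟩
    simpa [hSo] using hS
  set δ := sInf {d | Cardinal.mk (Sd d) = m} with hδdef
  have hδmem : Cardinal.mk (Sd δ) = m := csInf_mem ⟨_, hDmem⟩
  have hδle : δ ≤ l.ord := csInf_le' hDmem
  have hmin : ∀ d < δ, Cardinal.mk (Sd d) < m := by
    intro d hd
    have hne : Cardinal.mk (Sd d) ≠ m := fun h => absurd (csInf_le' (show d ∈ {d | Cardinal.mk (Sd d) = m} from h)) (not_le.2 hd)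
    have hsub : Sd d ⊆ S := fun x hx => hx.1
    exact lt_of_le_of_ne (hS ▸ mk_le_mk_of_subset hsub) hne
  have hlim : δ ≠ 0 ∧ ∀ c < δ, Order.succ c < δ := by
    constructor
    · intro h0
      have he : Sd δ = ∅ := by
        ext x
        simp only [hSddef, h0, (show ∀ a : Ordinal.{u}, ¬ a < 0 from fun a => (zero_le (a := a)).not_gt), and_false, mem_setOf_eq,
          mem_empty_iff_false]
      rw [he] at hδmem
      simp only [mk_emptyCollection] at hδmem
      exact hm0.ne' (by simpa using hδmem.symm)
    · intro c hc
      rcases lt_or_eq_of_le (Order.succ_le_of_lt hc) with h | h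
      · exact h
      exfalso
      have hsub : Sd δ ⊆ Sd c ∪ {x | x ∈ S ∧ stmtB l.ord x = c} := by
        rintro x ⟨hxS, hxd⟩
        rw [← h, Order.lt_succ_iff] at hxd
        rcases lt_or_eq_of_le hxd with h' | h'
        · exact Or.inl ⟨hxS, h'⟩
        · exact Or.inr ⟨hxS, h'⟩
      have h1 : Cardinal.mk {x | x ∈ S ∧ stmtB l.ord x = c} ≤ 1 := by
        refine mk_le_one_iff_set_subsingleton.2 fun x hx y hy => ?_
        exact stmtB_inj (hx.2.trans hy.2.symm)
      have hle' : m ≤ Cardinal.mk (Sd c) + 1 := by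
        calc m = Cardinal.mk (Sd δ) := hδmem.symm
        _ ≤ Cardinal.mk ((Sd c ∪ {x | x ∈ S ∧ stmtB l.ord x = c} : Set l.ord.ToType)) :=
            mk_le_mk_of_subset hsub
        _ ≤ Cardinal.mk (Sd c) + Cardinal.mk {x | x ∈ S ∧ stmtB l.ord x = c} :=
            mk_union_le _ _
        _ ≤ Cardinal.mk (Sd c) + 1 := add_le_add_right h1 _
      have : Cardinal.mk (Sd c) + 1 < m :=
        Cardinal.add_lt_of_lt hm (hmin c hc) (one_lt_aleph0.trans_le hm)
      exact absurd hle' (not_le.2 this)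
  have hcofinal : ∀ c < δ, ∃ x ∈ Sd δ, c < stmtB l.ord x := by
    intro c hc
    by_contra hcon
    push_neg at hcon
    have hsub : Sd δ ⊆ Sd (Order.succ c) := fun x hx =>
      ⟨hx.1, (hcon x hx).trans_lt (Order.lt_succ c)⟩
    have := mk_le_mk_of_subset hsub
    rw [hδmem] at this
    exact absurd this (not_le.2 (hmin _ (hlim.2 c hc)))
  have hSdne : (Sd δ).Nonempty := by
    rw [← nonempty_coe_sort, ← mk_ne_zero_iff, hδmem]
    exact hm0.ne'
  have hcof_le : δ.cof ≤ m := by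
    have hub := stmt_card_le_of_unbounded (o := δ)
      (Set.range fun x : ↥(Sd δ) => (Ordinal.ToType.mk (o := δ)) ⟨stmtB l.ord x.1, x.2.2⟩) ?_
    · refine hub.trans (mk_range_le.trans ?_)
      rw [hδmem]
    · intro η hη
      obtain ⟨x, hx, hlt⟩ := hcofinal η hη
      refine ⟨_, ⟨⟨x, hx⟩, rfl⟩, ?_⟩
      rw [stmtB_apply]
      exact hlt
  have hcof_ge : m ≤ δ.cof := by
    by_contra hcon
    push_neg at hcon
    set A : δ.cof.ord.ToType → Set l.ord.ToType := fun ξ =>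
      {x | x ∈ S ∧ ∃ h : stmtB δ.cof.ord ξ < δ.cof.ord,
        stmtB l.ord x ≤ stmtFseq δ (stmtB δ.cof.ord ξ) h} with hAdef
    have hcover : Sd δ ⊆ ⋃ ξ, A ξ := by
      rintro x ⟨hxS, hxd⟩
      have hb : stmtB l.ord x < Ordinal.blsub _ (stmtFseq δ) := by
        rw [(stmtFseq_spec δ).blsub_eq]; exact hxd
      obtain ⟨i, hi, hle⟩ := Ordinal.lt_blsub_iff.1 hb
      refine mem_iUnion.2 ⟨(Ordinal.ToType.mk (o := δ.cof.ord)) ⟨i, hi⟩, hxS, ?_⟩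
      have hBi : stmtB δ.cof.ord ((Ordinal.ToType.mk (o := δ.cof.ord)) ⟨i, hi⟩) = i :=
        stmtB_apply _ _
      rw [hBi]
      exact ⟨hi, hle⟩
    have hA_lt : ∀ ξ, Cardinal.mk (A ξ) < m := by
      intro ξ
      have hfi : stmtFseq δ (stmtB δ.cof.ord ξ) (stmtB_lt _ ξ) < δ :=
        (stmtFseq_spec δ).lt _
      have hsub : A ξ ⊆ Sd (Order.succ (stmtFseq δ (stmtB δ.cof.ord ξ) (stmtB_lt _ ξ))) := by
        rintro x ⟨hx1, h', hle'⟩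
        exact ⟨hx1, Order.lt_succ_iff.2 hle'⟩
      exact (mk_le_mk_of_subset hsub).trans_lt (hmin _ (hlim.2 _ hfi))
    have h1 : Cardinal.mk δ.cof.ord.ToType = δ.cof := by
      rw [Cardinal.mk_toType, Cardinal.card_ord]
    have h2 : (⨆ ξ, Cardinal.mk (A ξ)) < m :=
      Cardinal.iSup_lt_of_isRegular hreg (by rw [h1]; exact hcon) hA_lt
    have hbig : Cardinal.mk (Sd δ) < m := by
      calc Cardinal.mk (Sd δ) ≤ Cardinal.mk (⋃ ξ, A ξ) := mk_le_mk_of_subset hcover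
      _ ≤ Cardinal.mk δ.cof.ord.ToType * ⨆ ξ, Cardinal.mk (A ξ) := mk_iUnion_le A
      _ < m := Cardinal.mul_lt_of_lt hm (by rw [h1]; exact hcon) h2
    rw [hδmem] at hbig
    exact lt_irrefl m hbig
  have hcofo : δ.cof.ord = m.ord := by rw [le_antisymm hcof_le hcof_ge]
  -- choose the point a
  have key : ∃ a : l.ord.ToType, ∀ η < m.ord,
      ∃ y ∈ stmtF l.ord hmpos a '' S, η < stmtB m.ord y := by
    rcases lt_or_eq_of_le hδle with hδo | hδo
    · refine ⟨(Ordinal.ToType.mk (o := l.ord)) ⟨δ, hδo⟩, ?_⟩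
      intro η hη
      have hη' : η < δ.cof.ord := by rw [hcofo]; exact hη
      obtain ⟨x, hxSd, hlt⟩ := hcofinal (stmtFseq δ η hη') ((stmtFseq_spec δ).lt hη')
      have hboa : stmtB l.ord ((Ordinal.ToType.mk (o := l.ord)) ⟨δ, hδo⟩) = δ := stmtB_apply _ _
      have hbx : stmtB l.ord x < stmtB l.ord ((Ordinal.ToType.mk (o := l.ord)) ⟨δ, hδo⟩) := by
        rw [hboa]; exact hxSd.2
      have hF : stmtF l.ord hmpos ((Ordinal.ToType.mk (o := l.ord)) ⟨δ, hδo⟩) x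
          = stmtCode hmpos (stmtG δ (stmtB l.ord x)) := by
        rw [stmtF, if_pos hbx, hboa]
      refine ⟨_, ⟨x, hxSd.1, rfl⟩, ?_⟩
      rw [hF, stmtB_code hmpos (by rw [← hcofo]; exact stmtG_lt hxSd.2)]
      exact stmtG_gt hη' hxSd.2 hlt
    · obtain ⟨a⟩ := hlne
      refine ⟨a, ?_⟩
      intro η hη
      have hη' : η < δ.cof.ord := by rw [hcofo]; exact hη
      have hba : stmtB l.ord a < δ := by rw [hδo]; exact stmtB_lt _ a
      obtain ⟨x, hxSd, hlt⟩ := hcofinal (max (stmtFseq δ η hη') (stmtB l.ord a))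
        (max_lt ((stmtFseq_spec δ).lt hη') hba)
      have h1 : stmtFseq δ η hη' < stmtB l.ord x := (le_max_left _ _).trans_lt hlt
      have h2 : ¬ stmtB l.ord x < stmtB l.ord a :=
        not_lt.2 ((le_max_right _ _).trans hlt.le)
      have hF : stmtF l.ord hmpos a x = stmtCode hmpos (stmtG δ (stmtB l.ord x)) := by
        rw [stmtF, if_neg h2, hδo]
      refine ⟨_, ⟨x, hxSd.1, rfl⟩, ?_⟩
      rw [hF, stmtB_code hmpos (by rw [← hcofo]; exact stmtG_lt hxSd.2)]
      exact stmtG_gt hη' hxSd.2 h1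
  obtain ⟨a, ha⟩ := key
  refine ⟨a, le_antisymm (mk_image_le.trans_eq hS) ?_⟩
  have := stmt_card_le_of_unbounded (stmtF l.ord hmpos a '' S) ha
  rwa [hreg.cof_eq] at this
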